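/- arXiv:0806.2936 — 6 statements merged into one kernel-verified Lean document; each statement's English description precedes it below -/
import Mathlib

section
/- For all positive integers n and m, the Fuß-Catalan number (1/(mn+1)) * binomial((m+1)n, n) is a positive integer. -/
/-- For all positive integers `n` and `m`, the Fuß-Catalan number
`(1/(mn+1)) * binomial((m+1)n, n)` is a positive integer. -/
theorem fussCatalan_pos_integer (n m : ℕ) (hn : 0 < n) (hm : 0 < m) :
    ∃ k : ℕ, 0 < k ∧ (Nat.choose ((m + 1) * n) n : ℚ) / (m * n + 1) = k := by
  set N := (m + 1) * n with hN
  set a := Nat.choose N n with ha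
  set b := Nat.choose N (n - 1) with hb
  -- key identity: a * n = b * (N - (n-1))
  have h1 : a * n = b * (N - (n - 1)) := by
    have h := Nat.choose_succ_right_eq N (n - 1)
    rw [Nat.sub_add_cancel hn] at h
    exact h
  have hsub : N - (n - 1) = m * n + 1 := by
    have : N = m * n + n := by rw [hN]; ring
    omega
  rw [hsub] at h1
  -- h1 : a * n = b * (m*n+1)
  have hmb : m * b ≤ a := by
    have h2 : m * b * n ≤ a * n := by
      calc m * b * n = m * n * b := by ring
        _ ≤ m * n * b + b := Nat.le_add_right _ _
        _ = b * (m * n + 1) := by ring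
        _ = a * n := h1.symm
    exact Nat.le_of_mul_le_mul_right h2 hn
  refine ⟨a - m * b, ?_, ?_⟩
  · have hapos : 0 < a := Nat.choose_pos (by rw [hN]; nlinarith)
    -- show (m*n+1)*(a - m*b) = a, hence a - m*b > 0
    have key : (m * n + 1) * (a - m * b) = a := by
      have expand : (m * n + 1) * (a - m * b)
          = (m * n + 1) * a - (m * n + 1) * (m * b) := Nat.mul_sub _ _ _
      rw [expand]
      have h3 : (m * n + 1) * (m * b) = m * n * a := by
        calc (m * n + 1) * (m * b) = m * (b * (m * n + 1)) := by ring
          _ = m * (a * n) := by rw [h1]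
          _ = m * n * a := by ring
      rw [h3]
      have : (m * n + 1) * a = m * n * a + a := by ring
      omega
    by_contra h
    push_neg at h
    interval_cases (a - m * b)
    simp at key
    omega
  · have key : (m * n + 1) * (a - m * b) = a := by
      have h3 : (m * n + 1) * (m * b) = m * n * a := by
        calc (m * n + 1) * (m * b) = m * (b * (m * n + 1)) := by ring
          _ = m * (a * n) := by rw [h1]
          _ = m * n * a := by ring
      have expand : (m * n + 1) * (a - m * b)
          = (m * n + 1) * a - (m * n + 1) * (m * b) := Nat.mul_sub _ _ _
      rw [expand, h3]
      have : (m * n + 1) * a = m * n * a + a := by ring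
      omega
    have hd : ((m : ℚ) * n + 1) ≠ 0 := by positivity
    rw [div_eq_iff hd]
    have := congrArg (fun x : ℕ => (x : ℚ)) key
    push_cast at this ⊢
    linarith [this]
end

section
/- For every integer n ≥ 2, the identity binomial(2n, n) - binomial(2n-2, n-1) = (∏_{i=1}^{n-1} (2i + 2n - 2)/(2i)) * ((n + 2n - 2)/n) holds as an identity of rational numbers. -/
lemma prod_ratio_eq_centralBinom (m : ℕ) :
    (∏ i ∈ Finset.Icc 1 m, (((i : ℚ) + m) / i)) = Nat.choose (2 * m) m := by
  have hm : (Nat.factorial m : ℚ) ≠ 0 := by exact_mod_cast Nat.factorial_ne_zero m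
  have h1 : (∏ i ∈ Finset.Icc 1 m, ((i : ℚ) + m)) = ∏ i ∈ Finset.Ioc m (2 * m), (i : ℚ) := by
    rw [show Finset.Ioc m (2 * m) = Finset.Icc (m + 1) (m + m) by
      rw [two_mul, Finset.Icc_add_one_left_eq_Ioc]]
    rw [show Finset.Icc (m + 1) (m + m) = Finset.Icc (1 + m) (m + m) by rw [add_comm 1 m]]
    rw [← Finset.map_add_right_Icc 1 m m, Finset.prod_map]
    simp [add_comm]
  have h2 : (∏ i ∈ Finset.Icc 1 m, (i : ℚ)) * ∏ i ∈ Finset.Ioc m (2 * m), (i : ℚ)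
      = (Nat.factorial (2 * m) : ℚ) := by
    rw [show Finset.Icc 1 m = Finset.Ioc 0 m from rfl]
    rw [Finset.prod_Ioc_consecutive _ (Nat.zero_le m) (by omega)]
    rw [show Finset.Ioc 0 (2 * m) = Finset.Icc 1 (2 * m) from rfl]
    rw [show Finset.Icc 1 (2 * m) = Finset.Ico 1 (2 * m + 1) by rw [Finset.Ico_add_one_right_eq_Icc]]
    rw [← Nat.cast_prod, Finset.prod_Ico_id_eq_factorial]
  have hfm : (∏ i ∈ Finset.Icc 1 m, (i : ℚ)) = (Nat.factorial m : ℚ) := by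
    rw [show Finset.Icc 1 m = Finset.Ico 1 (m + 1) by rw [Finset.Ico_add_one_right_eq_Icc]]
    rw [← Nat.cast_prod, Finset.prod_Ico_id_eq_factorial]
  rw [Finset.prod_div_distrib, h1, hfm]
  rw [Nat.cast_choose ℚ (by omega : m ≤ 2 * m)]
  rw [show 2 * m - m = m by omega]
  rw [hfm] at h2
  field_simp
  linear_combination h2

/-- `C(2n,n) - C(2n-2,n-1) = (∏_{i=1}^{n-1} (2i+2n-2)/(2i)) * ((n+2n-2)/n)`
in `ℚ` (type `D_n` Catalan number), for `n ≥ 2`. -/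
theorem typeD_catalan_prod_formula (n : ℕ) (hn : 2 ≤ n) :
    (Nat.choose (2 * n) n : ℚ) - (Nat.choose (2 * n - 2) (n - 1) : ℚ)
      = (∏ i ∈ Finset.Icc 1 (n - 1), ((2 * (i : ℚ) + 2 * n - 2) / (2 * i)))
          * (((n : ℚ) + 2 * n - 2) / n) := by
  obtain ⟨m, rfl⟩ : ∃ m, n = m + 1 := ⟨n - 1, by omega⟩
  have hm1 : (m : ℚ) + 1 ≠ 0 := by positivity
  have hprod : (∏ i ∈ Finset.Icc 1 ((m + 1) - 1), ((2 * (i : ℚ) + 2 * (m + 1 : ℕ) - 2) / (2 * i)))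
      = (Nat.choose (2 * m) m : ℚ) := by
    rw [← prod_ratio_eq_centralBinom m]
    simp only [Nat.add_sub_cancel]
    apply Finset.prod_congr rfl
    intro i hi
    have hi1 : 1 ≤ i := (Finset.mem_Icc.mp hi).1
    have hiq : (i : ℚ) ≠ 0 := by exact_mod_cast Nat.one_le_iff_ne_zero.mp hi1
    push_cast
    rw [show 2 * (i : ℚ) + 2 * ((m : ℚ) + 1) - 2 = 2 * ((i : ℚ) + m) by ring]
    rw [mul_div_mul_left _ _ (by norm_num : (2 : ℚ) ≠ 0)]
  rw [hprod]
  have hrec := Nat.succ_mul_centralBinom_succ m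
  have hrecq : ((m : ℚ) + 1) * (Nat.centralBinom (m + 1) : ℚ)
      = 2 * (2 * m + 1) * (Nat.centralBinom m : ℚ) := by exact_mod_cast hrec
  have hc1 : (Nat.choose (2 * (m + 1)) (m + 1) : ℚ) = (Nat.centralBinom (m + 1) : ℚ) := rfl
  have hc2 : (Nat.choose (2 * (m + 1) - 2) ((m + 1) - 1) : ℚ)
      = (Nat.centralBinom m : ℚ) := by
    rw [show 2 * (m + 1) - 2 = 2 * m by omega, Nat.add_sub_cancel]; rfl
  have hc3 : (Nat.choose (2 * m) m : ℚ) = (Nat.centralBinom m : ℚ) := rfl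
  rw [hc1, hc2, hc3]
  push_cast
  field_simp
  linear_combination hrecq
end

section
/- For every positive integer n and every positive integer m, the number of partitions λ whose Young diagram fits inside the staircase partition ((n-1)m, (n-2)m, ..., 2m, m) equals the Fuß-Catalan number (1/(mn+1)) * binomial((m+1)n, n). -/
open Finset
open Fin.NatCast

namespace MCat

variable (m p : ℕ)

abbrev NL : ℕ := (m+1)*(p+1)+1

def cnt (s : Finset (Fin (NL m p))) (k : ℕ) : ℕ :=
  ((range k).filter (fun i : ℕ => ((i : Fin (NL m p)) ∈ s))).card

lemma cnt_zero (s) : cnt m p s 0 = 0 := by simp [cnt]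

lemma cnt_eq_sum (s : Finset (Fin (NL m p))) (k : ℕ) :
    cnt m p s k = ∑ i ∈ range k, if ((i : Fin (NL m p)) ∈ s) then 1 else 0 := by
  rw [cnt, Finset.card_filter]

lemma cnt_add (s : Finset (Fin (NL m p))) (a b : ℕ) :
    cnt m p s (a + b)
      = cnt m p s a + ∑ i ∈ range b, if (((a + i : ℕ) : Fin (NL m p)) ∈ s) then 1 else 0 := by
  rw [cnt_eq_sum, cnt_eq_sum, Finset.sum_range_add]

lemma sum_period (s : Finset (Fin (NL m p))) (a : ℕ) :
    (∑ i ∈ range (NL m p), if (((a + i : ℕ) : Fin (NL m p)) ∈ s) then 1 else 0) = s.card := by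
  have h1 : ∀ i : ℕ, (((a + i : ℕ) : Fin (NL m p))) = (a : Fin (NL m p)) + (i : Fin (NL m p)) := by
    intro i; push_cast; ring
  calc (∑ i ∈ range (NL m p), if (((a + i : ℕ) : Fin (NL m p)) ∈ s) then 1 else 0)
      = ∑ i ∈ range (NL m p),
          (fun x : ℕ => if ((a : Fin (NL m p)) + (x : Fin (NL m p)) ∈ s) then 1 else 0) i := by
        refine Finset.sum_congr rfl fun i _ => by rw [h1]
    _ = ∑ j : Fin (NL m p), if ((a : Fin (NL m p)) + j ∈ s) then 1 else 0 := by
        rw [← Fin.sum_univ_eq_sum_range]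
        refine Finset.sum_congr rfl fun j _ => by rw [Fin.cast_val_eq_self]
    _ = ∑ j : Fin (NL m p), if (j ∈ s) then 1 else 0 :=
        Fintype.sum_equiv (Equiv.addLeft ((a : Fin (NL m p)))) _ _ (fun j => rfl)
    _ = s.card := by rw [← Finset.card_filter]; congr 1; ext j; simp

lemma cnt_period (s : Finset (Fin (NL m p))) (hs : s.card = p + 1) (k : ℕ) :
    cnt m p s (k + NL m p) = cnt m p s k + (p + 1) := by
  rw [cnt_add, sum_period, hs]

def rot (r : Fin (NL m p)) (s : Finset (Fin (NL m p))) : Finset (Fin (NL m p)) :=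
  s.map (Equiv.subRight r).toEmbedding

lemma mem_rot (r : Fin (NL m p)) (s) (x : Fin (NL m p)) : x ∈ rot m p r s ↔ x + r ∈ s := by
  simp [rot, Finset.mem_map_equiv]

lemma card_rot (r : Fin (NL m p)) (s) : (rot m p r s).card = s.card := Finset.card_map _

lemma rot_rot (a b : Fin (NL m p)) (s) : rot m p a (rot m p b s) = rot m p (a + b) s := by
  ext x; rw [mem_rot, mem_rot, mem_rot, add_assoc]

lemma rot_zero (s) : rot m p 0 s = s := by
  ext x; rw [mem_rot, add_zero]

lemma cnt_rot (r : Fin (NL m p)) (s) (k : ℕ) :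
    cnt m p s ((r : ℕ) + k) = cnt m p s (r : ℕ) + cnt m p (rot m p r s) k := by
  rw [cnt_eq_sum, cnt_eq_sum, cnt_eq_sum, Finset.sum_range_add]
  congr 1
  refine Finset.sum_congr rfl fun i _ => ?_
  simp only [mem_rot]
  have : (((r : ℕ) + i : ℕ) : Fin (NL m p)) = (i : Fin (NL m p)) + r := by
    push_cast
    rw [add_comm]
  rw [this]

def GoodAt (s : Finset (Fin (NL m p))) (r : ℕ) : Prop :=
  ∀ k, 0 < k → k ≤ NL m p → (m+1) * cnt m p s (r + k) < k + (m+1) * cnt m p s r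

def Good (s : Finset (Fin (NL m p))) : Prop := GoodAt m p s 0

/-- the auxiliary height function -/
noncomputable def gg (s : Finset (Fin (NL m p))) (x : ℕ) : ℤ :=
  (m+1) * (cnt m p s x : ℤ) - x

lemma gg_period (s) (hs : s.card = p + 1) (x : ℕ) :
    gg m p s (x + NL m p) = gg m p s x - 1 := by
  rw [gg, gg, cnt_period m p s hs]
  push_cast
  ring

lemma goodAt_iff_gg (s) (r : ℕ) :
    GoodAt m p s r ↔ ∀ k, 0 < k → k ≤ NL m p → gg m p s (r + k) < gg m p s r := by
  refine forall_congr' fun k => forall_congr' fun hk => forall_congr' fun hkN => ?_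
  rw [gg, gg]
  rw [Nat.cast_add]
  constructor
  · intro h
    have := (Nat.cast_lt (α := ℤ)).2 h
    push_cast at this ⊢
    linarith
  · intro h
    have : ((m : ℤ)+1) * (cnt m p s (r+k) : ℤ) < k + (m+1) * (cnt m p s r : ℤ) := by linarith
    exact_mod_cast this

lemma exists_goodAt (s) (hs : s.card = p + 1) :
    ∃ r : ℕ, r < NL m p ∧ GoodAt m p s r := by
  classical
  have hN0 : 0 < NL m p := Nat.succ_pos _
  have hne : (range (NL m p)).Nonempty := Finset.nonempty_range_iff.2 (by omega)
  set g := gg m p s with hg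
  set M := ((range (NL m p)).image g).max' (hne.image g) with hM
  have hTne : ((range (NL m p)).filter (fun j => g j = M)).Nonempty := by
    obtain ⟨x, hx, hgx⟩ := Finset.mem_image.1
      (((range (NL m p)).image g).max'_mem (hne.image g))
    exact ⟨x, Finset.mem_filter.2 ⟨hx, hgx⟩⟩
  set r := ((range (NL m p)).filter (fun j => g j = M)).max' hTne with hr
  have hrmem := ((range (NL m p)).filter (fun j => g j = M)).max'_mem hTne
  rw [Finset.mem_filter, Finset.mem_range] at hrmem
  obtain ⟨hrN, hgr⟩ := hrmem
  have hle : ∀ j, j < NL m p → g j ≤ M := fun j hj =>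
    Finset.le_max' _ _ (Finset.mem_image_of_mem g (Finset.mem_range.2 hj))
  have hlast : ∀ j, j < NL m p → g j = M → j ≤ r := fun j hj hgj =>
    Finset.le_max' _ _ (Finset.mem_filter.2 ⟨Finset.mem_range.2 hj, hgj⟩)
  refine ⟨r, hrN, (goodAt_iff_gg m p s r).2 fun k hk hkN => ?_⟩
  rw [← hg, hgr]
  rcases lt_or_ge (r + k) (NL m p) with hlt | hge
  · rcases lt_or_eq_of_le (hle _ hlt) with h | h
    · exact h
    · exact absurd (hlast _ hlt h) (by omega)
  · have hx : r + k = (r + k - NL m p) + NL m p := by omega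
    rw [hx, hg, gg_period m p s hs, ← hg]
    have := hle (r + k - NL m p) (by omega)
    omega

lemma goodAt_unique (s) (hs : s.card = p + 1) {a b : ℕ} (ha : a < NL m p) (hb : b < NL m p)
    (hga : GoodAt m p s a) (hgb : GoodAt m p s b) : a = b := by
  rw [goodAt_iff_gg] at hga hgb
  by_contra hne
  wlog hab : a < b generalizing a b
  · exact this hb ha hgb hga (Ne.symm hne) (by omega)
  have h1 : gg m p s b < gg m p s a := by
    have := hga (b - a) (by omega) (by omega)
    rwa [Nat.add_sub_cancel' (le_of_lt hab)] at this
  have h2 : gg m p s (a + NL m p) < gg m p s b := by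
    have := hgb (a + NL m p - b) (by omega) (by omega)
    rwa [show b + (a + NL m p - b) = a + NL m p by omega] at this
  rw [gg_period m p s hs] at h2
  omega

lemma good_rot_iff (r : Fin (NL m p)) (s) : Good m p (rot m p r s) ↔ GoodAt m p s (r : ℕ) := by
  unfold Good GoodAt
  refine forall_congr' fun k => imp_congr_right fun hk => imp_congr_right fun hkN => ?_
  rw [zero_add, cnt_zero, Nat.mul_zero, Nat.add_zero, cnt_rot m p r s k, Nat.mul_add]
  generalize (m+1) * cnt m p s (r : ℕ) = A
  generalize (m+1) * cnt m p (rot m p r s) k = B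
  omega

lemma rot_injective (r : Fin (NL m p)) : Function.Injective (rot m p r) := fun s t h => by
  have := congrArg (rot m p (-r)) h
  rwa [rot_rot, rot_rot, neg_add_cancel, rot_zero, rot_zero] at this

open scoped Classical in
noncomputable def GoodW : Finset (Finset (Fin (NL m p))) :=
  (powersetCard (p+1) (univ : Finset (Fin (NL m p)))).filter (Good m p)

lemma goodW_card_mul :
    (GoodW m p).card * NL m p = (NL m p).choose (p+1) := by
  classical
  have key : ((GoodW m p) ×ˢ (univ : Finset (Fin (NL m p)))).card
      = (powersetCard (p+1) (univ : Finset (Fin (NL m p)))).card := by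
    refine Finset.card_bij (fun a _ => rot m p a.2 a.1) ?_ ?_ ?_
    · rintro ⟨u, r⟩ hur
      rw [Finset.mem_product, GoodW, Finset.mem_filter, Finset.mem_powersetCard_univ] at hur
      rw [Finset.mem_powersetCard_univ, card_rot]
      exact hur.1.1
    · rintro ⟨u, r⟩ hur ⟨u', r'⟩ hur' heq
      rw [Finset.mem_product, GoodW, Finset.mem_filter, Finset.mem_powersetCard_univ] at hur hur'
      change rot m p r u = rot m p r' u' at heq
      have hcard : (rot m p r u).card = p + 1 := by rw [card_rot]; exact hur.1.1
      have hg1 : GoodAt m p (rot m p r u) ((-r : Fin (NL m p)) : ℕ) := by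
        rw [← good_rot_iff, rot_rot, neg_add_cancel, rot_zero]; exact hur.1.2
      have hg2 : GoodAt m p (rot m p r u) ((-r' : Fin (NL m p)) : ℕ) := by
        rw [← good_rot_iff, heq, rot_rot, neg_add_cancel, rot_zero]; exact hur'.1.2
      have hvr := goodAt_unique m p _ hcard (Fin.is_lt _) (Fin.is_lt _) hg1 hg2
      have hrr : r = r' := neg_injective (Fin.val_injective hvr)
      subst hrr
      have huu : u = u' := rot_injective m p r heq
      simp [huu]
    · intro w hw
      rw [Finset.mem_powersetCard_univ] at hw
      obtain ⟨r₀, hr₀N, hr₀⟩ := exists_goodAt m p w hw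
      set rf : Fin (NL m p) := ⟨r₀, hr₀N⟩ with hrf
      refine ⟨(rot m p rf w, -rf), ?_, ?_⟩
      · rw [Finset.mem_product, GoodW, Finset.mem_filter, Finset.mem_powersetCard_univ]
        refine ⟨⟨by rw [card_rot]; exact hw, ?_⟩, Finset.mem_univ _⟩
        rw [good_rot_iff]
        exact hr₀
      · show rot m p (-rf) (rot m p rf w) = w
        rw [rot_rot, neg_add_cancel, rot_zero]
  rw [Finset.card_product, Finset.card_univ, Fintype.card_fin] at key
  rw [key, Finset.card_powersetCard, Finset.card_univ, Fintype.card_fin]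

/-! ### from partitions to good words -/

def ext0 (l : Fin p → ℕ) : Fin (p+1) → ℕ :=
  fun j => if h : (j : ℕ) < p then l ⟨j, h⟩ else 0

def qq (l : Fin p → ℕ) (i : Fin (p+1)) : ℕ := m*(p+1) + 1 + i - ext0 p l i

section
variable {m p : ℕ} {l : Fin p → ℕ}

lemma ext0_le (hb : ∀ j, l j ≤ (p - (j : ℕ)) * m) (j : Fin (p+1)) :
    ext0 p l j ≤ (p - (j : ℕ)) * m := by
  unfold ext0
  split
  · exact hb _
  · exact Nat.zero_le _

lemma ext0_le_K (hb : ∀ j, l j ≤ (p - (j : ℕ)) * m) (j : Fin (p+1)) :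
    ext0 p l j ≤ m * (p+1) :=
  (ext0_le hb j).trans (by
    calc (p - (j : ℕ)) * m ≤ (p+1) * m := Nat.mul_le_mul (by omega) le_rfl
      _ = m * (p+1) := mul_comm _ _)

lemma ext0_antitone (hl : Antitone l) : Antitone (ext0 p l) := by
  intro j j' hjj
  have hjj' : (j : ℕ) ≤ (j' : ℕ) := hjj
  unfold ext0
  split
  · next h =>
    rw [dif_pos (by omega : (j : ℕ) < p)]
    exact hl (by rw [Fin.mk_le_mk]; exact hjj')
  · exact Nat.zero_le _

lemma qq_lt_NL (i : Fin (p+1)) : qq m p l i < NL m p := by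
  have h1 : qq m p l i ≤ m*(p+1) + 1 + (i : ℕ) := Nat.sub_le _ _
  have h2 : (i : ℕ) < p + 1 := i.isLt
  have h3 : (m+1)*(p+1)+1 = m*(p+1) + (p+1) + 1 := by ring
  have h4 : NL m p = (m+1)*(p+1)+1 := rfl
  omega

lemma qq_strictMono (hl : Antitone l) (hb : ∀ j, l j ≤ (p - (j : ℕ)) * m) :
    StrictMono (qq m p l) := by
  intro i i' hii
  have hE := ext0_le_K hb i
  have hE' := ext0_le_K hb i'
  have hmono : ext0 p l i' ≤ ext0 p l i := ext0_antitone hl (le_of_lt hii)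
  have hii' : (i : ℕ) < (i' : ℕ) := hii
  unfold qq
  omega

end

def posF (l : Fin p → ℕ) : Finset (Fin (NL m p)) :=
  univ.image (fun i : Fin (p+1) => (⟨qq m p l i, qq_lt_NL i⟩ : Fin (NL m p)))

section
variable {m p : ℕ} {l : Fin p → ℕ}

lemma card_posF (hl : Antitone l) (hb : ∀ j, l j ≤ (p - (j : ℕ)) * m) :
    (posF m p l).card = p + 1 := by
  rw [posF, Finset.card_image_of_injective _ (fun a b hab => ?_), Finset.card_univ,
    Fintype.card_fin]
  exact (qq_strictMono hl hb).injective (by simpa [Fin.ext_iff] using hab)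

lemma cnt_posF (hl : Antitone l) (hb : ∀ j, l j ≤ (p - (j : ℕ)) * m)
    {k : ℕ} (hk : k ≤ NL m p) :
    cnt m p (posF m p l) k = (univ.filter (fun j : Fin (p+1) => qq m p l j < k)).card := by
  rw [cnt]
  have hset : (range k).filter (fun i : ℕ => ((i : Fin (NL m p)) ∈ posF m p l))
      = (univ.filter (fun j : Fin (p+1) => qq m p l j < k)).image (qq m p l) := by
    ext a
    simp only [Finset.mem_filter, Finset.mem_range, Finset.mem_image, posF, Finset.mem_univ,
      true_and]
    constructor
    · rintro ⟨hak, j, hj⟩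
      have hjv : qq m p l j = a := by
        have := congrArg Fin.val hj
        simpa [Fin.val_natCast, Nat.mod_eq_of_lt (lt_of_lt_of_le hak hk)] using this
      exact ⟨j, hjv ▸ hak, hjv⟩
    · rintro ⟨j, hjk, hja⟩
      refine ⟨hja ▸ hjk, j, ?_⟩
      rw [Fin.ext_iff]
      simp [Fin.val_natCast, hja, Nat.mod_eq_of_lt (lt_of_lt_of_le (hja ▸ hjk) hk)]
  rw [hset, Finset.card_image_of_injective _ (qq_strictMono hl hb).injective]

lemma good_posF (hl : Antitone l) (hb : ∀ j, l j ≤ (p - (j : ℕ)) * m) :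
    Good m p (posF m p l) := by
  intro k hk hkN
  rw [zero_add, cnt_zero, Nat.mul_zero, Nat.add_zero, cnt_posF hl hb hkN]
  set t := (univ.filter (fun j : Fin (p+1) => qq m p l j < k)).card with ht
  rcases Nat.eq_zero_or_pos t with h0 | h0
  · rw [h0, Nat.mul_zero]; exact hk
  have htle : t ≤ p + 1 := by
    rw [ht]
    exact (Finset.card_filter_le _ _).trans (by rw [Finset.card_univ, Fintype.card_fin])
  have ht1 : t - 1 < p + 1 := by omega
  obtain ⟨jt, hjt⟩ : ∃ j : Fin (p+1), (j : ℕ) = t - 1 := ⟨⟨t-1, ht1⟩, rfl⟩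
  have htmem : jt ∈ univ.filter (fun j : Fin (p+1) => qq m p l j < k) := by
    by_contra hc
    have hsub : (univ.filter (fun j : Fin (p+1) => qq m p l j < k))
        ⊆ univ.filter (fun j : Fin (p+1) => (j : ℕ) < t - 1) := by
      intro j hj
      rw [Finset.mem_filter] at hj ⊢
      refine ⟨Finset.mem_univ _, ?_⟩
      by_contra hge
      exact hc (Finset.mem_filter.2 ⟨Finset.mem_univ _,
        lt_of_le_of_lt ((qq_strictMono hl hb).monotone (by
          show jt ≤ j
          rw [Fin.le_def, hjt]; omega)) hj.2⟩)
    have hcard2 : (univ.filter (fun j : Fin (p+1) => (j : ℕ) < t - 1)).card ≤ t - 1 := by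
      calc (univ.filter (fun j : Fin (p+1) => (j : ℕ) < t - 1)).card
          ≤ (range (t-1)).card := by
            refine Finset.card_le_card_of_injOn (fun j => (j : ℕ)) ?_ ?_
            · intro j hj
              rw [Finset.mem_coe, Finset.mem_filter] at hj
              exact Finset.mem_range.2 hj.2
            · exact Fin.val_injective.injOn
        _ = t - 1 := Finset.card_range _
    have := Finset.card_le_card hsub
    omega
  rw [Finset.mem_filter] at htmem
  have hqlt : qq m p l jt < k := htmem.2
  have key : (m+1) * t ≤ qq m p l jt := by
    have hEb : ext0 p l jt ≤ (p - (t-1)) * m := by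
      have := ext0_le hb jt
      rwa [hjt] at this
    have h1 : (p - (t-1)) * m + t * m = (p+1) * m := by
      rw [← Nat.add_mul]
      congr 1
      omega
    have h2 : (m+1) * t = t * m + t := by ring
    have h3 : (p+1) * m = m * (p+1) := by ring
    unfold qq
    rw [hjt]
    omega
  omega

end

/-! ### from good words to partitions -/

lemma strictMono_gap {M : ℕ} {f : Fin M → ℕ} (hf : StrictMono f) (a b : Fin M) (h : a ≤ b) :
    f a + ((b : ℕ) - (a : ℕ)) ≤ f b := by
  obtain ⟨d, hd⟩ : ∃ d, (b : ℕ) = (a : ℕ) + d := ⟨(b : ℕ) - (a : ℕ), by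
    have : (a : ℕ) ≤ (b : ℕ) := h
    omega⟩
  clear h
  induction d generalizing b with
  | zero =>
    have hab : a = b := Fin.ext (by omega)
    subst hab
    simp
  | succ d ih =>
    have hb' : (a : ℕ) + d < M := by have := b.isLt; omega
    have h1 := ih ⟨(a : ℕ) + d, hb'⟩ rfl
    have h2 : f ⟨(a : ℕ) + d, hb'⟩ < f b := hf (by rw [Fin.lt_def]; simp; omega)
    simp at h1
    omega

section
variable {m p : ℕ} {s : Finset (Fin (NL m p))}

/-- value of the i-th element of s -/
noncomputable def QQ (hs : s.card = p + 1) (i : Fin (p+1)) : ℕ :=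
  ((s.orderEmbOfFin hs i : Fin (NL m p)) : ℕ)

lemma QQ_strictMono (hs : s.card = p + 1) : StrictMono (QQ hs) := fun a b hab => by
  exact (s.orderEmbOfFin hs).strictMono hab

lemma QQ_lt (hs : s.card = p + 1) (i : Fin (p+1)) : QQ hs i < NL m p := Fin.is_lt _

lemma QQ_mem (hs : s.card = p + 1) (i : Fin (p+1)) :
    (((QQ hs i : ℕ) : Fin (NL m p))) ∈ s := by
  rw [QQ, Fin.cast_val_eq_self]
  exact Finset.orderEmbOfFin_mem _ _ _

lemma lbQ (hs : s.card = p + 1) (hg : Good m p s) (i : Fin (p+1)) :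
    (m+1) * ((i : ℕ) + 1) ≤ QQ hs i := by
  have hkN : QQ hs i + 1 ≤ NL m p := QQ_lt hs i
  have hcnt : (i : ℕ) + 1 ≤ cnt m p s (QQ hs i + 1) := by
    rw [cnt]
    calc (i : ℕ) + 1 = (range ((i : ℕ) + 1)).card := (Finset.card_range _).symm
      _ ≤ _ := by
        refine Finset.card_le_card_of_injOn
          (fun x : ℕ => QQ hs ⟨x % (p+1), Nat.mod_lt _ (by omega)⟩) ?_ ?_
        · intro x hx
          rw [Finset.mem_coe, Finset.mem_range] at hx
          have hxp : x % (p+1) = x := Nat.mod_eq_of_lt (by have := i.isLt; omega)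
          rw [Finset.mem_coe, Finset.mem_filter, Finset.mem_range]
          dsimp only
          constructor
          · have : QQ hs ⟨x % (p+1), Nat.mod_lt _ (by omega)⟩ ≤ QQ hs i := by
              apply (QQ_strictMono hs).monotone
              rw [Fin.le_def]
              simp [hxp]
              omega
            omega
          · exact QQ_mem hs _
        · intro x hx y hy hxy
          rw [Finset.mem_coe, Finset.mem_range] at hx hy
          have hxp : x % (p+1) = x := Nat.mod_eq_of_lt (by have := i.isLt; omega)
          have hyp : y % (p+1) = y := Nat.mod_eq_of_lt (by have := i.isLt; omega)
          have := (QQ_strictMono hs).injective hxy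
          rw [Fin.ext_iff] at this
          simpa [hxp, hyp] using this
  have hgood := hg (QQ hs i + 1) (by omega) hkN
  rw [zero_add] at hgood
  simp only [cnt, Finset.range_zero, Finset.filter_empty, Finset.card_empty, Nat.mul_zero,
    Nat.add_zero] at hgood
  have : (m+1) * ((i : ℕ) + 1) ≤ (m+1) * cnt m p s (QQ hs i + 1) :=
    Nat.mul_le_mul_left _ hcnt
  rw [cnt] at this
  omega

lemma ubQ (hs : s.card = p + 1) (i : Fin (p+1)) :
    QQ hs i + (p - (i : ℕ)) ≤ (m+1)*(p+1) := by
  have hgap := strictMono_gap (QQ_strictMono hs) i ⟨p, by omega⟩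
    (by rw [Fin.le_def]; simp; omega)
  have hlast : QQ hs ⟨p, by omega⟩ < NL m p := QQ_lt hs _
  have hN : NL m p = (m+1)*(p+1)+1 := rfl
  simp at hgap
  omega

end

noncomputable def invL {m p : ℕ} (s : Finset (Fin (NL m p))) (hs : s.card = p + 1) :
    Fin p → ℕ :=
  fun j => m*(p+1) + 1 + j - QQ hs ⟨j, by omega⟩

section
variable {m p : ℕ} {l : Fin p → ℕ} {s : Finset (Fin (NL m p))}

lemma invL_antitone (hs : s.card = p + 1) (hg : Good m p s) : Antitone (invL s hs) := by
  intro j j' hjj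
  have hjj' : (j : ℕ) ≤ (j' : ℕ) := hjj
  have hgap := strictMono_gap (QQ_strictMono hs) ⟨j, by omega⟩ ⟨j', by omega⟩
    (by rw [Fin.le_def]; simpa using hjj')
  have hub := ubQ hs (⟨j', by omega⟩ : Fin (p+1))
  have hub' := ubQ hs (⟨j, by omega⟩ : Fin (p+1))
  have h3 : (m+1)*(p+1) = m*(p+1) + (p+1) := by ring
  have hj' : (j' : ℕ) < p := j'.isLt
  unfold invL
  simp only [Fin.val_mk] at *
  omega

lemma invL_bound (hs : s.card = p + 1) (hg : Good m p s) (j : Fin p) :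
    invL s hs j ≤ (p - (j : ℕ)) * m := by
  have hlb := lbQ hs hg ⟨j, by omega⟩
  have h1 : (p - (j : ℕ)) * m + ((j : ℕ) + 1) * m = (p+1) * m := by
    rw [← Nat.add_mul]
    congr 1
    have := j.isLt
    omega
  have h2 : (m+1) * ((j : ℕ) + 1) = ((j : ℕ) + 1) * m + (j : ℕ) + 1 := by ring
  have h3 : (p+1) * m = m * (p+1) := by ring
  unfold invL
  simp only [Fin.val_mk] at *
  omega

lemma qq_invL (hs : s.card = p + 1) (hg : Good m p s) (i : Fin (p+1)) :
    qq m p (invL s hs) i = QQ hs i := by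
  have hub : QQ hs i + (p - (i : ℕ)) ≤ (m+1)*(p+1) := ubQ hs i
  have h3 : (m+1)*(p+1) = m*(p+1) + (p+1) := by ring
  have hi := i.isLt
  unfold qq ext0
  split
  · next h =>
    show m*(p+1) + 1 + (i : ℕ) - invL s hs ⟨(i : ℕ), h⟩ = QQ hs i
    unfold invL
    have heta : (⟨((⟨(i : ℕ), h⟩ : Fin p) : ℕ), by omega⟩ : Fin (p+1)) = i := by
      apply Fin.ext; simp
    simp only [Fin.val_mk, heta]
    omega
  · next h =>
    have hip : (i : ℕ) = p := by omega
    have hlb := lbQ hs hg i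
    have hlt := QQ_lt hs i
    have hN : NL m p = (m+1)*(p+1)+1 := rfl
    rw [hip] at hlb ⊢
    omega

lemma posF_invL (hs : s.card = p + 1) (hg : Good m p s) :
    posF m p (invL s hs) = s := by
  apply Finset.eq_of_subset_of_card_le
  · intro x hx
    rw [posF, Finset.mem_image] at hx
    obtain ⟨i, _, hix⟩ := hx
    have hval : (x : ℕ) = QQ hs i := by
      rw [← hix]
      show qq m p (invL s hs) i = QQ hs i
      exact qq_invL hs hg i
    have := QQ_mem hs i
    have hx2 : x = ((QQ hs i : ℕ) : Fin (NL m p)) := by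
      apply Fin.ext
      rw [hval, Fin.val_natCast, Nat.mod_eq_of_lt (QQ_lt hs i)]
    rw [hx2]
    exact this
  · rw [hs, card_posF (invL_antitone hs hg) (fun j => invL_bound hs hg j)]

lemma invL_posF (hl : Antitone l) (hb : ∀ j, l j ≤ (p - (j : ℕ)) * m) (j : Fin p) :
    invL (posF m p l) (card_posF hl hb) j = l j := by
  have hemb : (fun i : Fin (p+1) => (⟨qq m p l i, qq_lt_NL i⟩ : Fin (NL m p)))
      = (posF m p l).orderEmbOfFin (card_posF hl hb) := by
    apply Finset.orderEmbOfFin_unique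
    · intro i
      exact Finset.mem_image_of_mem _ (Finset.mem_univ i)
    · intro a b hab
      rw [Fin.lt_def]
      exact qq_strictMono hl hb hab
  have hQQ : ∀ i : Fin (p+1), QQ (card_posF hl hb) i = qq m p l i := by
    intro i
    rw [QQ, ← hemb]
  have hj := j.isLt
  unfold invL
  rw [hQQ]
  have hq : qq m p l ⟨(j : ℕ), by omega⟩
      = m*(p+1) + 1 + (j : ℕ) - ext0 p l ⟨(j : ℕ), by omega⟩ := rfl
  have hext : ext0 p l ⟨(j : ℕ), by omega⟩ = l j := by
    simp [ext0, hj]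
  have hK := ext0_le_K hb (⟨(j : ℕ), by omega⟩ : Fin (p+1))
  simp only [Fin.val_mk] at hq hext hK ⊢
  rw [hq, hext] at *
  omega

end

noncomputable def theEquiv (m p : ℕ) :
    {l : Fin p → ℕ // Antitone l ∧ ∀ j : Fin p, l j ≤ (p - (j : ℕ)) * m}
      ≃ {s : Finset (Fin (NL m p)) // s.card = p + 1 ∧ Good m p s} where
  toFun l := ⟨posF m p l.1, card_posF l.2.1 l.2.2, good_posF l.2.1 l.2.2⟩
  invFun s := ⟨invL s.1 s.2.1, invL_antitone s.2.1 s.2.2, fun j => invL_bound s.2.1 s.2.2 j⟩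
  left_inv l := Subtype.ext (funext fun j => invL_posF l.2.1 l.2.2 j)
  right_inv s := Subtype.ext (posF_invL s.2.1 s.2.2)

lemma card_partitions (m p : ℕ) :
    Nat.card {l : Fin p → ℕ // Antitone l ∧ ∀ j : Fin p, l j ≤ (p - (j : ℕ)) * m}
      = (GoodW m p).card := by
  classical
  rw [Nat.card_congr (theEquiv m p)]
  have h2 : ∀ s : Finset (Fin (NL m p)), (s.card = p + 1 ∧ Good m p s) ↔ s ∈ GoodW m p := by
    intro s
    rw [GoodW, Finset.mem_filter, Finset.mem_powersetCard_univ]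
  rw [Nat.card_congr (Equiv.subtypeEquivRight h2), Nat.card_eq_fintype_card]
  exact Fintype.card_coe _

end MCat

/-- the number of partitions `λ = (λ_1 ≥ ⋯ ≥ λ_{n-1} ≥ 0)` fitting inside
the staircase `((n-1)m, …, 2m, m)` (i.e. `λ_i ≤ (n-i)m`) equals the Fuß-Catalan number
`(1/(mn+1)) * C((m+1)n, n)`. -/
theorem card_mCatalanPaths (n m : ℕ) (hn : 0 < n) (hm : 0 < m) :
    (Nat.card {l : Fin (n - 1) → ℕ //
        Antitone l ∧ ∀ j : Fin (n - 1), l j ≤ (n - 1 - (j : ℕ)) * m} : ℚ)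
      = 1 / (m * n + 1) * (Nat.choose ((m + 1) * n) n : ℚ) := by
  obtain ⟨p, rfl⟩ : ∃ p, n = p + 1 := ⟨n - 1, by omega⟩
  have hnat : Nat.card {l : Fin (p + 1 - 1) → ℕ //
      Antitone l ∧ ∀ j : Fin (p + 1 - 1), l j ≤ (p + 1 - 1 - (j : ℕ)) * m}
      = (MCat.GoodW m p).card := by
    simp only [Nat.add_sub_cancel]
    exact MCat.card_partitions m p
  rw [hnat]
  clear hnat
  have hcyc : (MCat.GoodW m p).card * ((m+1)*(p+1) + 1) = ((m+1)*(p+1) + 1).choose (p+1) :=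
    MCat.goodW_card_mul m p
  have hid := Nat.choose_mul_succ_eq ((m+1)*(p+1)) (p+1)
  have hsub : (m+1)*(p+1) + 1 - (p+1) = m*(p+1) + 1 := by
    have h : (m+1)*(p+1) = m*(p+1) + (p+1) := by ring
    omega
  rw [hsub] at hid
  -- pass to ℚ
  have hq1 : ((MCat.GoodW m p).card : ℚ) * ((m+1)*(p+1) + 1)
      = (((m+1)*(p+1) + 1).choose (p+1) : ℚ) := by exact_mod_cast congrArg (Nat.cast : ℕ → ℚ) hcyc
  have hq2 : ((((m+1)*(p+1)).choose (p+1) : ℕ) : ℚ) * ((m+1)*(p+1) + 1)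
      = (((m+1)*(p+1) + 1).choose (p+1) : ℚ) * ((m:ℚ)*(p+1) + 1) := by
    exact_mod_cast congrArg (Nat.cast : ℕ → ℚ) hid
  have hD : ((m:ℚ) * ((p:ℚ)+1) + 1) ≠ 0 := by positivity
  have hA1 : (((m:ℚ)+1)*((p:ℚ)+1) + 1) ≠ 0 := by positivity
  push_cast at hq1 hq2 ⊢
  rw [div_mul_eq_mul_div, one_mul, eq_div_iff hD]
  apply mul_right_cancel₀ hA1
  linear_combination ((m:ℚ) * ((p:ℚ)+1) + 1) * hq1 - hq2
end

section
/- The Fuß-Catalan numbers satisfy the recurrence Cat_{n+1}^{(m)} = ∑_{k_1 + ... + k_{m+1} = n} Cat_{k_1}^{(m)} ⋯ Cat_{k_{m+1}}^{(m)} with Cat_0^{(m)} = 1, where the sum ranges over all (m+1)-tuples of nonnegative integers summing to n. -/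
/-- The Fuß-Catalan number `Cat_n^{(m)}`, with `Cat_0^{(m)} = 1`. -/
def fussCat (m n : ℕ) : ℚ :=
  if n = 0 then 1 else (Nat.choose ((m + 1) * n) n : ℚ) / (m * n + 1)

/-- Raney numbers `R(n,j) = j/((m+1)n+j) C((m+1)n+j, n)`, with `R(0,j)=1`. -/
def raney (m n j : ℕ) : ℚ :=
  if n = 0 then 1 else (j : ℚ) / ((m + 1) * n + j) * (Nat.choose ((m + 1) * n + j) n)

lemma raney_eq (m n j : ℕ) (hj : j ≠ 0) :
    raney m n j = (j : ℚ) / ((m + 1) * n + j) * (Nat.choose ((m + 1) * n + j) n) := by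
  rcases Nat.eq_zero_or_pos n with h | h
  · subst h
    have hj' : (j : ℚ) ≠ 0 := by exact_mod_cast hj
    simp [raney, div_self hj']
  · rw [raney, if_neg (by omega)]

lemma raney_zero_right (m x : ℕ) (hx : x ≠ 0) : raney m x 0 = 0 := by
  rw [raney, if_neg hx]
  simp

lemma raney_rec (m n j : ℕ) :
    raney m (n + 1) (j + 1) = raney m (n + 1) j + raney m n (j + (m + 1)) := by
  have key1 : (m + 1) * n + (j + (m + 1)) = (m + 1) * (n + 1) + j := by ring
  have hN : (m + 1) * (n + 1) + j = (m + 1) * n + m + 1 + j := by ring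
  -- choose facts
  have hle : n ≤ (m + 1) * (n + 1) + j := by nlinarith
  have hsub : (m + 1) * (n + 1) + j - n = m * n + m + 1 + j := by
    have : (m + 1) * (n + 1) = m * n + m + n + 1 := by ring
    omega
  have h2 : (Nat.choose ((m + 1) * (n + 1) + j) (n + 1) : ℚ) * (n + 1)
      = (Nat.choose ((m + 1) * (n + 1) + j) n) * (m * n + m + 1 + j) := by
    have := Nat.choose_succ_right_eq ((m + 1) * (n + 1) + j) n
    rw [hsub] at this
    exact_mod_cast congrArg (Nat.cast (R := ℚ)) this
  have h1 : (Nat.choose ((m + 1) * (n + 1) + (j + 1)) (n + 1) : ℚ)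
      = Nat.choose ((m + 1) * (n + 1) + j) n + Nat.choose ((m + 1) * (n + 1) + j) (n + 1) := by
    have e : (m + 1) * (n + 1) + (j + 1) = ((m + 1) * (n + 1) + j) + 1 := by ring
    rw [e, Nat.choose_succ_succ' ((m + 1) * (n + 1) + j) n]
    push_cast
    ring
  rw [raney_eq m (n + 1) (j + 1) (by omega), raney_eq m n (j + (m + 1)) (by omega),
    raney, if_neg (Nat.succ_ne_zero n), key1, h1]
  set a : ℚ := (Nat.choose ((m + 1) * (n + 1) + j) n : ℚ) with ha
  set b : ℚ := (Nat.choose ((m + 1) * (n + 1) + j) (n + 1) : ℚ) with hb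
  have hb' : b = a * (m * n + m + 1 + j) / (n + 1) := by
    field_simp
    linarith [h2]
  have d1 : ((m : ℚ) + 1) * (n + 1) + (j + 1) ≠ 0 := by positivity
  have d2 : ((m : ℚ) + 1) * (n + 1) + j ≠ 0 := by positivity
  have d3 : ((n : ℚ) + 1) ≠ 0 := by positivity
  rw [hb']
  push_cast
  field_simp
  ring

/-- Rothe–Hagen convolution. -/
lemma raney_conv (m : ℕ) : ∀ n b a, (∑ k ∈ Finset.range (n + 1),
    raney m k a * raney m (n - k) b) = raney m n (a + b) := by
  intro n
  induction n using Nat.strong_induction_on with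
  | _ n ih =>
    match n with
    | 0 => intro b a; simp [raney]
    | (n' + 1) =>
      intro b
      induction b with
      | zero =>
        intro a
        rw [Finset.sum_eq_single (n' + 1)]
        · simp [raney]
        · intro k hk hne
          have hk' : k ≤ n' := by
            simp only [Finset.mem_range] at hk; omega
          have : n' + 1 - k ≠ 0 := by omega
          rw [raney_zero_right _ _ this, mul_zero]
        · intro h; simp at h
      | succ b ihb =>
        intro a
        rw [Finset.sum_range_succ]
        have step : ∀ k ∈ Finset.range (n' + 1),
            raney m k a * raney m (n' + 1 - k) (b + 1)
            = raney m k a * raney m (n' + 1 - k) b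
              + raney m k a * raney m (n' - k) (b + (m + 1)) := by
          intro k hk
          have hk' : k ≤ n' := by simp only [Finset.mem_range] at hk; omega
          have e1 : n' + 1 - k = (n' - k) + 1 := by omega
          rw [e1, raney_rec, mul_add, ← e1]
        rw [Finset.sum_congr rfl step, Finset.sum_add_distrib]
        have t1 : (∑ k ∈ Finset.range (n' + 1), raney m k a * raney m (n' + 1 - k) b)
            + raney m (n' + 1) a * raney m (n' + 1 - (n' + 1)) (b + 1)
            = raney m (n' + 1) (a + b) := by
          have : raney m (n' + 1 - (n' + 1)) (b + 1) = raney m (n' + 1 - (n' + 1)) b := by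
            simp [raney]
          rw [this, ← Finset.sum_range_succ (fun k => raney m k a * raney m (n' + 1 - k) b)]
          exact ihb a
        have t2 : (∑ k ∈ Finset.range (n' + 1), raney m k a * raney m (n' - k) (b + (m + 1)))
            = raney m n' (a + (b + (m + 1))) := ih n' (by omega) (b + (m + 1)) a
        rw [add_right_comm, t1, t2]
        have : a + (b + (m + 1)) = (a + b) + (m + 1) := by ring
        rw [this, ← raney_rec]
        congr 1

lemma sum_antidiagonalTuple_succ (f : ℕ → ℚ) (j n : ℕ) :
    (∑ k ∈ Finset.Nat.antidiagonalTuple (j + 1) n, ∏ i, f (k i))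
      = ∑ ab ∈ Finset.HasAntidiagonal.antidiagonal n,
          f ab.1 * ∑ t ∈ Finset.Nat.antidiagonalTuple j ab.2, ∏ i, f (t i) := by
  simp_rw [Finset.mul_sum, Finset.sum_sigma']
  refine Finset.sum_bij'
    (i := fun k _ => (⟨(k 0, ∑ i : Fin j, k i.succ), Fin.tail k⟩ :
      Σ _ab : ℕ × ℕ, Fin j → ℕ))
    (j := fun x _ => Fin.cons x.1.1 x.2) ?_ ?_ ?_ ?_ ?_
  · intro k hk
    rw [Finset.Nat.mem_antidiagonalTuple] at hk
    simp only [Finset.mem_sigma, Finset.HasAntidiagonal.mem_antidiagonal, Finset.Nat.mem_antidiagonalTuple]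
    exact ⟨by rw [← hk, Fin.sum_univ_succ], rfl⟩
  · intro x hx
    simp only [Finset.mem_sigma, Finset.HasAntidiagonal.mem_antidiagonal,
      Finset.Nat.mem_antidiagonalTuple] at hx
    simp only [Finset.Nat.mem_antidiagonalTuple, Fin.sum_cons, hx.2, hx.1]
  · intro k hk
    simp [Fin.cons_self_tail]
  · intro x hx
    simp only [Finset.mem_sigma, Finset.HasAntidiagonal.mem_antidiagonal,
      Finset.Nat.mem_antidiagonalTuple] at hx
    refine Sigma.ext ?_ (by simp)
    simp only [Fin.cons_zero, Fin.cons_succ]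
    rw [hx.2]
  · intro k hk
    rw [Fin.prod_univ_succ]
    rfl

lemma fussCat_eq_raney (m x : ℕ) : fussCat m x = raney m x 1 := by
  rcases Nat.eq_zero_or_pos x with h | h
  · subst h; simp [fussCat, raney]
  · rw [fussCat, if_neg (by omega), raney, if_neg (by omega)]
    have h1 : ((m + 1) * x + 1) * Nat.choose ((m + 1) * x) x
        = Nat.choose ((m + 1) * x + 1) (x + 1) * (x + 1) := Nat.add_one_mul_choose_eq _ _
    have h2 : Nat.choose ((m + 1) * x + 1) (x + 1) * (x + 1)
        = Nat.choose ((m + 1) * x + 1) x * ((m + 1) * x + 1 - x) :=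
      Nat.choose_succ_right_eq _ _
    have hsub : (m + 1) * x + 1 - x = m * x + 1 := by
      have : (m + 1) * x = m * x + x := by ring
      omega
    rw [hsub] at h2
    have key : (((m + 1) * x + 1 : ℕ) : ℚ) * Nat.choose ((m + 1) * x) x
        = (Nat.choose ((m + 1) * x + 1) x : ℚ) * (m * x + 1) := by
      exact_mod_cast congrArg (Nat.cast (R := ℚ)) (h1.trans h2)
    push_cast at key ⊢
    have d1 : ((m : ℚ) * x + 1) ≠ 0 := by positivity
    have d2 : ((m : ℚ) + 1) * x + 1 ≠ 0 := by positivity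
    field_simp
    linarith [key]

lemma fussCat_succ_eq_raney (m n : ℕ) : fussCat m (n + 1) = raney m n (m + 1) := by
  rw [fussCat, if_neg (Nat.succ_ne_zero n), raney_eq m n (m + 1) (by omega)]
  have key1 : (m + 1) * n + (m + 1) = (m + 1) * (n + 1) := by ring
  have hsub : (m + 1) * (n + 1) - n = m * n + m + 1 := by
    have : (m + 1) * (n + 1) = m * n + m + n + 1 := by ring
    omega
  have h2 : Nat.choose ((m + 1) * (n + 1)) (n + 1) * (n + 1)
      = Nat.choose ((m + 1) * (n + 1)) n * (m * n + m + 1) := by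
    have := Nat.choose_succ_right_eq ((m + 1) * (n + 1)) n
    rwa [hsub] at this
  have key : (Nat.choose ((m + 1) * (n + 1)) (n + 1) : ℚ) * (n + 1)
      = (Nat.choose ((m + 1) * (n + 1)) n : ℚ) * (m * n + m + 1) := by
    exact_mod_cast congrArg (Nat.cast (R := ℚ)) h2
  rw [key1]
  push_cast at key ⊢
  have d1 : ((m : ℚ) * (n + 1) + 1) ≠ 0 := by positivity
  have d2 : ((m : ℚ) + 1) * (n + 1) ≠ 0 := by positivity
  have d3 : ((n : ℚ) + 1) ≠ 0 := by positivity
  field_simp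
  nlinarith [key]

lemma sum_tuple_raney (m : ℕ) : ∀ j n, (∑ k ∈ Finset.Nat.antidiagonalTuple j n,
    ∏ i, raney m (k i) 1) = raney m n j := by
  intro j
  induction j with
  | zero =>
    intro n
    cases n with
    | zero => simp [raney]
    | succ n => simp [raney]
  | succ j ihj =>
    intro n
    rw [sum_antidiagonalTuple_succ (fun x => raney m x 1) j n]
    simp_rw [ihj]
    rw [Finset.Nat.sum_antidiagonal_eq_sum_range_succ_mk]
    have h := raney_conv m n j 1
    rw [add_comm 1 j] at h
    exact h


/-- `Cat_{n+1}^{(m)} = ∑_{k_1+⋯+k_{m+1}=n} Cat_{k_1}^{(m)} ⋯ Cat_{k_{m+1}}^{(m)}`,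
the sum over all `(m+1)`-tuples of nonnegative integers summing to `n`. -/
theorem fussCat_recurrence (m : ℕ) (hm : 0 < m) (n : ℕ) :
    fussCat m (n + 1)
      = ∑ k ∈ Finset.Nat.antidiagonalTuple (m + 1) n, ∏ i, fussCat m (k i) := by
  rw [fussCat_succ_eq_raney]
  simp_rw [fussCat_eq_raney]
  exact (sum_tuple_raney m (m + 1) n).symm
end

section
/- The number of type B Catalan paths of length n (lattice paths of 2n steps north or east from (0,0) staying weakly above the diagonal x = y) equals binomial(2n, n). -/
open scoped Classical

/-- Number of north steps among the first `t` steps of the path `w` (`true` = north). -/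
def northCount (n : ℕ) (w : Fin (2 * n) → Bool) (t : ℕ) : ℕ :=
  (Finset.univ.filter (fun s : Fin (2 * n) => (s : ℕ) < t ∧ w s = true)).card

/-- Number of east steps among the first `t` steps of the path `w` (`false` = east). -/
def eastCount (n : ℕ) (w : Fin (2 * n) → Bool) (t : ℕ) : ℕ :=
  (Finset.univ.filter (fun s : Fin (2 * n) => (s : ℕ) < t ∧ w s = false)).card

/-- A type `B` Catalan path of length `n`: a lattice path of `2n` north/east steps starting
at the origin which stays weakly above the diagonal `x = y`, i.e. after each step the
number of east steps taken so far does not exceed the number of north steps. -/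
def IsBPath (n : ℕ) (w : Fin (2 * n) → Bool) : Prop :=
  ∀ t : ℕ, t ≤ 2 * n → eastCount n w t ≤ northCount n w t

namespace TypeBAux

/-- generic step count -/
def cnt (m : ℕ) (w : Fin m → Bool) (b : Bool) (t : ℕ) : ℕ :=
  (Finset.univ.filter (fun s : Fin m => (s : ℕ) < t ∧ w s = b)).card

lemma cnt_succ (m : ℕ) (w : Fin (m + 1) → Bool) (b : Bool) (t : ℕ) :
    cnt (m + 1) w b t
      = cnt m (Fin.init w) b t + (if m < t ∧ w (Fin.last m) = b then 1 else 0) := by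
  unfold cnt
  rw [Finset.card_filter, Finset.card_filter, Fin.sum_univ_castSucc]
  simp [Fin.init, Fin.last]
  rw [Finset.card_filter]
  exact Finset.sum_congr rfl (fun _ _ => by congr)

lemma cnt_ge (m : ℕ) (w : Fin m → Bool) (b : Bool) {t : ℕ} (h : m ≤ t) :
    cnt m w b t = cnt m w b m := by
  unfold cnt
  congr 1
  apply Finset.filter_congr
  intro s _
  have hs : (s : ℕ) < m := s.isLt
  simp [hs, lt_of_lt_of_le hs h]

lemma cnt_le (m : ℕ) (w : Fin m → Bool) (b : Bool) (t : ℕ) : cnt m w b t ≤ m := by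
  refine (Finset.card_filter_le _ _).trans ?_
  simp

lemma cnt_total (m : ℕ) (w : Fin m → Bool) :
    cnt m w false m + cnt m w true m = m := by
  unfold cnt
  have h1 : ∀ s : Fin m, ((s : ℕ) < m ∧ w s = false) ↔ ¬ (w s = true) := by
    intro s; simp [s.isLt]
  have h2 : ∀ s : Fin m, ((s : ℕ) < m ∧ w s = true) ↔ (w s = true) := by
    intro s; simp [s.isLt]
  rw [Finset.filter_congr (fun s _ => h1 s), Finset.filter_congr (fun s _ => h2 s)]
  rw [add_comm]
  rw [Finset.card_filter_add_card_filter_not]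
  simp

/-- nonnegativity -/
def IsB (m : ℕ) (w : Fin m → Bool) : Prop :=
  ∀ t : ℕ, t ≤ m → cnt m w false t ≤ cnt m w true t

noncomputable def Bset (m j : ℕ) : Finset (Fin m → Bool) :=
  Finset.univ.filter (fun w => IsB m w ∧ cnt m w true m = j)

lemma cnt_init {m : ℕ} (w : Fin (m + 1) → Bool) (b : Bool) {t : ℕ} (h : t ≤ m) :
    cnt (m + 1) w b t = cnt m (Fin.init w) b t := by
  rw [cnt_succ]
  have : ¬ m < t := by omega
  simp [this]

lemma cnt_top {m : ℕ} (w : Fin (m + 1) → Bool) (b : Bool) :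
    cnt (m + 1) w b (m + 1)
      = cnt m (Fin.init w) b m + (if w (Fin.last m) = b then 1 else 0) := by
  rw [cnt_succ]
  rw [cnt_ge m _ b (by omega)]
  simp

lemma isb_iff {m : ℕ} (w : Fin (m + 1) → Bool) :
    IsB (m + 1) w ↔
      IsB m (Fin.init w) ∧ cnt (m + 1) w false (m + 1) ≤ cnt (m + 1) w true (m + 1) := by
  constructor
  · intro h
    refine ⟨fun t ht => ?_, h (m + 1) le_rfl⟩
    rw [← cnt_init w false ht, ← cnt_init w true ht]
    exact h t (by omega)
  · rintro ⟨h1, h2⟩ t ht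
    rcases Nat.lt_or_ge t (m + 1) with h | h
    · have ht' : t ≤ m := by omega
      rw [cnt_init w false ht', cnt_init w true ht']
      exact h1 t ht'
    · have : t = m + 1 := by omega
      rw [this]; exact h2

lemma card_true (m j : ℕ) :
    ((Finset.univ : Finset (Fin (m + 1) → Bool)).filter
        (fun w => (IsB (m + 1) w ∧ cnt (m + 1) w true (m + 1) = j + 1) ∧
          w (Fin.last m) = true)).card = (Bset m j).card := by
  apply Finset.card_nbij' (fun w => Fin.init w) (fun v => Fin.snoc v true)
  · intro w hw
    simp only [Finset.mem_coe, Finset.mem_filter, Finset.mem_univ, true_and] at hw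
    obtain ⟨⟨hb, hn⟩, hl⟩ := hw
    have hnt : cnt (m + 1) w true (m + 1) = cnt m (Fin.init w) true m + 1 := by
      rw [cnt_top]; simp [hl]
    simp only [Finset.mem_coe, Bset, Finset.mem_filter, Finset.mem_univ, true_and]
    exact ⟨((isb_iff w).1 hb).1, by omega⟩
  · intro v hv
    simp only [Finset.mem_coe, Bset, Finset.mem_filter, Finset.mem_univ, true_and] at hv
    obtain ⟨hb, hn⟩ := hv
    have hinit : Fin.init (Fin.snoc v true : Fin (m + 1) → Bool) = v := Fin.init_snoc _ _
    have hlast : (Fin.snoc v true : Fin (m + 1) → Bool) (Fin.last m) = true := Fin.snoc_last _ _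
    have hnt : cnt (m + 1) (Fin.snoc v true) true (m + 1) = cnt m v true m + 1 := by
      rw [cnt_top, hinit]; simp [hlast]
    have het : cnt (m + 1) (Fin.snoc v true) false (m + 1) = cnt m v false m := by
      rw [cnt_top, hinit]; simp [hlast]
    simp only [Finset.mem_coe, Finset.mem_filter, Finset.mem_univ, true_and]
    refine ⟨⟨(isb_iff _).2 ⟨by rwa [hinit], ?_⟩, by omega⟩, hlast⟩
    rw [hnt, het]
    exact (hb m le_rfl).trans (by omega)
  · intro w hw
    simp only [Finset.mem_coe, Finset.mem_filter, Finset.mem_univ, true_and] at hw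
    rw [← hw.2]
    exact Fin.snoc_init_self w
  · intro v _
    exact Fin.init_snoc _ _

lemma card_false_pos (m j : ℕ) (h : m + 1 ≤ 2 * j) :
    ((Finset.univ : Finset (Fin (m + 1) → Bool)).filter
        (fun w => (IsB (m + 1) w ∧ cnt (m + 1) w true (m + 1) = j) ∧
          w (Fin.last m) = false)).card = (Bset m j).card := by
  apply Finset.card_nbij' (fun w => Fin.init w) (fun v => Fin.snoc v false)
  · intro w hw
    simp only [Finset.mem_coe, Finset.mem_filter, Finset.mem_univ, true_and] at hw
    obtain ⟨⟨hb, hn⟩, hl⟩ := hw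
    have hnt : cnt (m + 1) w true (m + 1) = cnt m (Fin.init w) true m := by
      rw [cnt_top]; simp [hl]
    simp only [Finset.mem_coe, Bset, Finset.mem_filter, Finset.mem_univ, true_and]
    exact ⟨((isb_iff w).1 hb).1, by omega⟩
  · intro v hv
    simp only [Finset.mem_coe, Bset, Finset.mem_filter, Finset.mem_univ, true_and] at hv
    obtain ⟨hb, hn⟩ := hv
    have hinit : Fin.init (Fin.snoc v false : Fin (m + 1) → Bool) = v := Fin.init_snoc _ _
    have hlast : (Fin.snoc v false : Fin (m + 1) → Bool) (Fin.last m) = false := Fin.snoc_last _ _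
    have hnt : cnt (m + 1) (Fin.snoc v false) true (m + 1) = cnt m v true m := by
      rw [cnt_top, hinit]; simp [hlast]
    have het : cnt (m + 1) (Fin.snoc v false) false (m + 1) = cnt m v false m + 1 := by
      rw [cnt_top, hinit]; simp [hlast]
    have htot := cnt_total m v
    simp only [Finset.mem_coe, Finset.mem_filter, Finset.mem_univ, true_and]
    refine ⟨⟨(isb_iff _).2 ⟨by rwa [hinit], ?_⟩, by omega⟩, hlast⟩
    rw [hnt, het]
    omega
  · intro w hw
    simp only [Finset.mem_coe, Finset.mem_filter, Finset.mem_univ, true_and] at hw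
    rw [← hw.2]
    exact Fin.snoc_init_self w
  · intro v _
    exact Fin.init_snoc _ _

lemma card_false_neg (m j : ℕ) (h : ¬ (m + 1 ≤ 2 * j)) :
    ((Finset.univ : Finset (Fin (m + 1) → Bool)).filter
        (fun w => (IsB (m + 1) w ∧ cnt (m + 1) w true (m + 1) = j) ∧
          w (Fin.last m) = false)).card = 0 := by
  rw [Finset.card_eq_zero, Finset.filter_eq_empty_iff]
  rintro w -
  rintro ⟨⟨hb, hn⟩, hl⟩
  have hnt : cnt (m + 1) w true (m + 1) = cnt m (Fin.init w) true m := by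
    rw [cnt_top]; simp [hl]
  have het : cnt (m + 1) w false (m + 1) = cnt m (Fin.init w) false m + 1 := by
    rw [cnt_top]; simp [hl]
  have htot := cnt_total m (Fin.init w)
  have hle := hb (m + 1) le_rfl
  omega

lemma card_true_zero (m : ℕ) :
    ((Finset.univ : Finset (Fin (m + 1) → Bool)).filter
        (fun w => (IsB (m + 1) w ∧ cnt (m + 1) w true (m + 1) = 0) ∧
          w (Fin.last m) = true)).card = 0 := by
  rw [Finset.card_eq_zero, Finset.filter_eq_empty_iff]
  rintro w -
  rintro ⟨⟨hb, hn⟩, hl⟩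
  have hnt : cnt (m + 1) w true (m + 1) = cnt m (Fin.init w) true m + 1 := by
    rw [cnt_top]; simp [hl]
  omega

lemma Bcard_succ (m j : ℕ) :
    (Bset (m + 1) j).card
      = (if j = 0 then 0 else (Bset m (j - 1)).card)
        + (if m + 1 ≤ 2 * j then (Bset m j).card else 0) := by
  have hsplit :
      ((Bset (m + 1) j).filter (fun w => w (Fin.last m) = true)).card
        + ((Bset (m + 1) j).filter (fun w => ¬ (w (Fin.last m) = true))).card
        = (Bset (m + 1) j).card :=
    Finset.card_filter_add_card_filter_not _
  have hneg : (Bset (m + 1) j).filter (fun w => ¬ (w (Fin.last m) = true))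
      = (Bset (m + 1) j).filter (fun w => w (Fin.last m) = false) := by
    apply Finset.filter_congr
    intro w _
    simp
  rw [hneg] at hsplit
  have e1 : (Bset (m + 1) j).filter (fun w => w (Fin.last m) = true)
      = (Finset.univ : Finset (Fin (m + 1) → Bool)).filter
        (fun w => (IsB (m + 1) w ∧ cnt (m + 1) w true (m + 1) = j) ∧
          w (Fin.last m) = true) := by
    rw [Bset, Finset.filter_filter]
  have e2 : (Bset (m + 1) j).filter (fun w => w (Fin.last m) = false)
      = (Finset.univ : Finset (Fin (m + 1) → Bool)).filter
        (fun w => (IsB (m + 1) w ∧ cnt (m + 1) w true (m + 1) = j) ∧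
          w (Fin.last m) = false) := by
    rw [Bset, Finset.filter_filter]
  have hT : ((Finset.univ : Finset (Fin (m + 1) → Bool)).filter
        (fun w => (IsB (m + 1) w ∧ cnt (m + 1) w true (m + 1) = j) ∧
          w (Fin.last m) = true)).card
      = (if j = 0 then 0 else (Bset m (j - 1)).card) := by
    rcases Nat.eq_zero_or_pos j with hj | hj
    · subst hj
      simp [card_true_zero m]
    · have hj0 : ¬ j = 0 := Nat.pos_iff_ne_zero.mp hj
      have hj1 : j - 1 + 1 = j := Nat.succ_pred_eq_of_pos hj
      rw [if_neg hj0]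
      have := card_true m (j - 1)
      rw [hj1] at this
      exact this
  have hF : ((Finset.univ : Finset (Fin (m + 1) → Bool)).filter
        (fun w => (IsB (m + 1) w ∧ cnt (m + 1) w true (m + 1) = j) ∧
          w (Fin.last m) = false)).card
      = (if m + 1 ≤ 2 * j then (Bset m j).card else 0) := by
    by_cases h : m + 1 ≤ 2 * j
    · rw [if_pos h, card_false_pos m j h]
    · rw [if_neg h, card_false_neg m j h]
  rw [← hsplit, e1, e2, hT, hF]

lemma choose_anti {m j : ℕ} (h : m ≤ 2 * j + 1) :
    Nat.choose m (j + 1) ≤ Nat.choose m j := by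
  rcases le_or_gt m j with hm | hm
  · rw [Nat.choose_eq_zero_of_lt (by omega)]
    exact Nat.zero_le _
  · rcases Nat.eq_or_lt_of_le h with he | hlt
    · -- m = 2j+1
      obtain rfl : m = 2 * j + 1 := he
      rw [Nat.choose_symm_half]
    · -- m ≤ 2j
      have h2 : m ≤ 2 * j := by omega
      rw [← Nat.choose_symm (le_of_lt hm), ← Nat.choose_symm (show j + 1 ≤ m by omega)]
      have key : m - (j + 1) + 1 = m - j := by omega
      rw [← key]
      exact Nat.choose_le_succ_of_lt_half_left (by omega)

lemma choose_mono {m j : ℕ} (h : 2 * j + 1 ≤ m) :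
    Nat.choose m j ≤ Nat.choose m (j + 1) := by
  rcases Nat.eq_or_lt_of_le h with he | hlt
  · obtain rfl : m = 2 * j + 1 := he.symm
    rw [Nat.choose_symm_half]
  · exact Nat.choose_le_succ_of_lt_half_left (by omega)

lemma D_rec (m j : ℕ) :
    Nat.choose (m + 1) j - Nat.choose (m + 1) (j + 1)
      = (if j = 0 then 0 else Nat.choose m (j - 1) - Nat.choose m j)
        + (if m + 1 ≤ 2 * j then Nat.choose m j - Nat.choose m (j + 1) else 0) := by
  rcases Nat.eq_zero_or_pos j with hj | hj
  · subst hj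
    simp [Nat.choose_one_right]
  · obtain ⟨i, rfl⟩ : ∃ i, j = i + 1 := ⟨j - 1, by omega⟩
    rw [if_neg (by omega)]
    simp only [Nat.add_sub_cancel]
    by_cases h : m + 1 ≤ 2 * (i + 1)
    · rw [if_pos h]
      rw [Nat.choose_succ_succ m i, Nat.choose_succ_succ m (i + 1)]
      simp only [Nat.succ_eq_add_one]
      have hb : Nat.choose m (i + 1) ≤ Nat.choose m i := choose_anti (by omega)
      have hc : Nat.choose m (i + 1 + 1) ≤ Nat.choose m (i + 1) := choose_anti (by omega)
      omega
    · rw [if_neg h]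
      have h1 : Nat.choose m i ≤ Nat.choose m (i + 1) := choose_mono (by omega)
      have h2 : Nat.choose (m + 1) (i + 1) ≤ Nat.choose (m + 1) (i + 1 + 1) :=
        choose_mono (by omega)
      omega

lemma Bcard (m j : ℕ) :
    (Bset m j).card = Nat.choose m j - Nat.choose m (j + 1) := by
  induction m generalizing j with
  | zero =>
    have hmem : ∀ w : Fin 0 → Bool, w ∈ Bset 0 j ↔ j = 0 := by
      intro w
      simp only [Bset, Finset.mem_filter, Finset.mem_univ, true_and]
      constructor
      · rintro ⟨-, hn⟩
        have : cnt 0 w true 0 = 0 := by simp [cnt]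
        omega
      · rintro rfl
        refine ⟨fun t ht => ?_, by simp [cnt]⟩
        simp [cnt]
    rcases Nat.eq_zero_or_pos j with hj | hj
    · subst hj
      have huniv : Bset 0 0 = Finset.univ :=
        Finset.eq_univ_iff_forall.2 (fun w => (hmem w).2 rfl)
      rw [huniv]
      simp
    · have hempty : Bset 0 j = ∅ := by
        rw [Finset.eq_empty_iff_forall_notMem]
        intro w hw
        exact absurd ((hmem w).1 hw) (by omega)
      rw [hempty,
        Nat.choose_eq_zero_of_lt (show 0 < j by omega),
        Nat.choose_eq_zero_of_lt (show 0 < j + 1 by omega)]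
      simp
  | succ m ih =>
    rw [Bcard_succ, D_rec]
    congr 1
    · rcases Nat.eq_zero_or_pos j with hj | hj
      · simp [hj]
      · obtain ⟨i, rfl⟩ : ∃ i, j = i + 1 := ⟨j - 1, by omega⟩
        simp [ih]
    · by_cases h : m + 1 ≤ 2 * j <;> simp [h, ih]

lemma sum_D (n : ℕ) :
    (∑ j ∈ Finset.range (2 * n + 1),
        (Nat.choose (2 * n) j - Nat.choose (2 * n) (j + 1)))
      = Nat.choose (2 * n) n := by
  have half : (2 * n) / 2 = n := by omega
  have key : ∀ k, k ≤ 2 * n + 1 →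
      (∑ j ∈ Finset.range k, (Nat.choose (2 * n) j - Nat.choose (2 * n) (j + 1)))
        = if k ≤ n then 0 else Nat.choose (2 * n) n - Nat.choose (2 * n) k := by
    intro k
    induction k with
    | zero => simp
    | succ k ih =>
      intro hk
      rw [Finset.sum_range_succ, ih (by omega)]
      by_cases h1 : k + 1 ≤ n
      · rw [if_pos (by omega), if_pos h1]
        have : Nat.choose (2 * n) k ≤ Nat.choose (2 * n) (k + 1) :=
          choose_mono (by omega)
        omega
      · rw [if_neg h1]
        by_cases h2 : k ≤ n
        · have : k = n := by omega
          subst this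
          simp
        · rw [if_neg h2]
          have hc1 : Nat.choose (2 * n) k ≤ Nat.choose (2 * n) n := by
            have := Nat.choose_le_middle k (2 * n)
            rwa [half] at this
          have hc2 : Nat.choose (2 * n) (k + 1) ≤ Nat.choose (2 * n) k :=
            choose_anti (by omega)
          omega
  rw [key (2 * n + 1) le_rfl]
  rw [if_neg (by omega)]
  rw [Nat.choose_eq_zero_of_lt (show 2 * n < 2 * n + 1 by omega)]
  simp

end TypeBAux

open TypeBAux in
/-- the number of type `B` Catalan paths of length `n` equals `C(2n, n)`. -/
theorem card_typeB_paths (n : ℕ) :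
    ((Finset.univ : Finset (Fin (2 * n) → Bool)).filter (fun w => IsBPath n w)).card
      = Nat.choose (2 * n) n := by
  have hb : ∀ w : Fin (2 * n) → Bool, IsBPath n w ↔ IsB (2 * n) w := fun w => Iff.rfl
  rw [Finset.card_eq_sum_card_fiberwise
    (f := fun w : Fin (2 * n) → Bool => cnt (2 * n) w true (2 * n))
    (t := Finset.range (2 * n + 1))
    (fun w _ => Finset.mem_range.2 (Nat.lt_succ_of_le (cnt_le (2 * n) w true (2 * n))))]
  rw [← sum_D n]
  apply Finset.sum_congr rfl
  intro j _
  rw [← Bcard (2 * n) j]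
  congr 1
  rw [Finset.filter_filter]
  apply Finset.filter_congr
  intro w _
  rw [hb w]
end

section
/- The set of alternating polynomials for the diagonal action of S_n on C[x_1, y_1, ..., x_n, y_n] is spanned as a complex vector space by the bivariate Vandermonde determinants Δ_G, where G ranges over all n-element subsets of N × N. -/
/-- The bivariate Vandermonde determinant `Δ_G = det(x_i^{α_j} y_i^{β_j})` in
`ℂ[x_1,y_1,…,x_n,y_n]` (variable `(i, true)` is `x_i`, variable `(i, false)` is `y_i`). -/
noncomputable def vand (n : ℕ) (g : Fin n → ℕ × ℕ) : MvPolynomial (Fin n × Bool) ℂ :=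
  Matrix.det (Matrix.of fun i j : Fin n =>
    MvPolynomial.X (i, true) ^ (g j).1 * MvPolynomial.X (i, false) ^ (g j).2)

open MvPolynomial Equiv Finset

lemma monomial_eq_prod {n : ℕ} (m : Fin n × Bool →₀ ℕ) :
    (MvPolynomial.monomial m (1:ℂ)) =
      ∏ i : Fin n, X (i, true) ^ m (i, true) * X (i, false) ^ m (i, false) := by
  have h1 : (monomial m (1:ℂ)) = ∏ v : Fin n × Bool, X v ^ m v := by
    rw [← MvPolynomial.prod_X_pow_eq_monomial]
    refine Finset.prod_subset (Finset.subset_univ _) fun v _ hv => ?_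
    rw [Finsupp.notMem_support_iff.mp hv, pow_zero]
  rw [h1, Fintype.prod_prod_type]
  exact Finset.prod_congr rfl fun i _ => by rw [Fintype.prod_bool]

lemma rename_vand {n : ℕ} (g : Fin n → ℕ × ℕ) (σ : Perm (Fin n)) :
    rename (fun v : Fin n × Bool => (σ v.1, v.2)) (vand n g)
      = ((Perm.sign σ : ℤ) : MvPolynomial (Fin n × Bool) ℂ) * vand n g := by
  rw [vand, AlgHom.map_det]
  have h : (rename (fun v : Fin n × Bool => (σ v.1, v.2))).mapMatrix
      (Matrix.of fun i j : Fin n =>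
        (X (i, true) : MvPolynomial (Fin n × Bool) ℂ) ^ (g j).1 * X (i, false) ^ (g j).2)
      = (Matrix.of fun i j : Fin n =>
        (X (i, true) : MvPolynomial (Fin n × Bool) ℂ) ^ (g j).1 * X (i, false) ^ (g j).2).submatrix σ id := by
    ext i j
    simp [rename_X]
  rw [h, Matrix.det_permute]

lemma sum_sign_rename_monomial {n : ℕ} (m : Fin n × Bool →₀ ℕ) :
    ∑ σ : Perm (Fin n), ((Perm.sign σ : ℤ) : MvPolynomial (Fin n × Bool) ℂ) *
        rename (fun v : Fin n × Bool => (σ v.1, v.2)) (monomial m 1)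
      = vand n (fun i => (m (i, true), m (i, false))) := by
  rw [vand, Matrix.det_apply']
  refine Finset.sum_congr rfl fun σ _ => ?_
  congr 1
  rw [monomial_eq_prod, map_prod]
  refine Finset.prod_congr rfl fun i _ => ?_
  simp [rename_X]

lemma vand_mem {n : ℕ} (g : Fin n → ℕ × ℕ) :
    vand n g ∈ Submodule.span ℂ {p : MvPolynomial (Fin n × Bool) ℂ |
        ∃ g' : Fin n → ℕ × ℕ, Function.Injective g' ∧ p = vand n g'} := by
  by_cases hg : Function.Injective g
  · exact Submodule.subset_span ⟨g, hg, rfl⟩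
  · have h0 : vand n g = 0 := by
      simp only [Function.Injective] at hg
      push_neg at hg
      obtain ⟨i, j, hgij, hij⟩ := hg
      exact Matrix.det_zero_of_column_eq hij fun k => by simp [hgij]
    rw [h0]; exact Submodule.zero_mem _

/-- the alternating polynomials for the diagonal action of `S_n` on
`ℂ[x,y]` are spanned, as a complex vector space, by the bivariate Vandermonde
determinants `Δ_G` for `n`-element subsets `G ⊆ ℕ × ℕ`. -/
theorem span_vand_eq_alternating (n : ℕ) :
    (Submodule.span ℂ {p : MvPolynomial (Fin n × Bool) ℂ |
        ∃ g : Fin n → ℕ × ℕ, Function.Injective g ∧ p = vand n g} : Set (MvPolynomial (Fin n × Bool) ℂ))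
      = {p : MvPolynomial (Fin n × Bool) ℂ | ∀ σ : Equiv.Perm (Fin n),
          MvPolynomial.rename (fun v : Fin n × Bool => (σ v.1, v.2)) p
            = ((Equiv.Perm.sign σ : ℤ) : MvPolynomial (Fin n × Bool) ℂ) * p} := by
  apply Set.Subset.antisymm
  · intro p hp
    rw [SetLike.mem_coe] at hp
    simp only [Set.mem_setOf_eq]
    induction hp using Submodule.span_induction with
    | mem x hx => obtain ⟨g, _, rfl⟩ := hx; exact fun σ => rename_vand g σ
    | zero => intro σ; simp
    | add x y _ _ hx hy => intro σ; rw [map_add, hx σ, hy σ, mul_add]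
    | smul c x _ hx => intro σ; rw [map_smul, hx σ, mul_smul_comm]
  · intro p hp
    simp only [Set.mem_setOf_eq] at hp
    rw [SetLike.mem_coe]
    have hfact : ((n.factorial : ℂ)) ≠ 0 := Nat.cast_ne_zero.2 n.factorial_ne_zero
    have h1 : ∀ σ : Perm (Fin n),
        ((Perm.sign σ : ℤ) : ℂ) • rename (fun v : Fin n × Bool => (σ v.1, v.2)) p = p := by
      intro σ
      rw [hp σ]
      rcases Int.units_eq_one_or (Perm.sign σ) with h | h <;> simp [h]
    have h2 : ∀ (σ : Perm (Fin n)) (m : Fin n × Bool →₀ ℕ),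
        ((Perm.sign σ : ℤ) : ℂ) •
            rename (fun v : Fin n × Bool => (σ v.1, v.2)) (monomial m (coeff m p))
          = coeff m p • (((Perm.sign σ : ℤ) : MvPolynomial (Fin n × Bool) ℂ) *
              rename (fun v : Fin n × Bool => (σ v.1, v.2)) (monomial m 1)) := by
      intro σ m
      have hm : (monomial m (coeff m p)) = coeff m p • monomial m (1:ℂ) := by
        rw [MvPolynomial.smul_monomial, smul_eq_mul, mul_one]
      rw [hm, map_smul, smul_comm]
      congr 1
      rw [MvPolynomial.smul_eq_C_mul, map_intCast]
    have key : (n.factorial : ℂ) • p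
        = ∑ m ∈ p.support, coeff m p • vand n (fun i => (m (i, true), m (i, false))) := by
      calc (n.factorial : ℂ) • p
          = ∑ σ : Perm (Fin n), ((Perm.sign σ : ℤ) : ℂ) •
              rename (fun v : Fin n × Bool => (σ v.1, v.2)) p := by
            rw [Finset.sum_congr rfl fun σ _ => h1 σ, Finset.sum_const, Finset.card_univ,
              Fintype.card_perm, Fintype.card_fin, ← Nat.cast_smul_eq_nsmul ℂ]
        _ = ∑ σ : Perm (Fin n), ∑ m ∈ p.support, ((Perm.sign σ : ℤ) : ℂ) •
              rename (fun v : Fin n × Bool => (σ v.1, v.2)) (monomial m (coeff m p)) := by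
            refine Finset.sum_congr rfl fun σ _ => ?_
            conv_lhs => rw [MvPolynomial.as_sum p]
            rw [map_sum, Finset.smul_sum]
        _ = ∑ m ∈ p.support, ∑ σ : Perm (Fin n), ((Perm.sign σ : ℤ) : ℂ) •
              rename (fun v : Fin n × Bool => (σ v.1, v.2)) (monomial m (coeff m p)) :=
            Finset.sum_comm
        _ = ∑ m ∈ p.support, coeff m p • vand n (fun i => (m (i, true), m (i, false))) := by
            refine Finset.sum_congr rfl fun m _ => ?_
            rw [Finset.sum_congr rfl fun σ _ => h2 σ m, ← Finset.smul_sum,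
              sum_sign_rename_monomial]
    have hp' : p = (n.factorial : ℂ)⁻¹ •
        ∑ m ∈ p.support, coeff m p • vand n (fun i => (m (i, true), m (i, false))) := by
      rw [← key, smul_smul, inv_mul_cancel₀ hfact, one_smul]
    rw [hp']
    exact Submodule.smul_mem _ _ (Submodule.sum_mem _ fun m _ =>
      Submodule.smul_mem _ _ (vand_mem _))
end
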